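/- arXiv:0909.3253 — 2 statements merged into one kernel-verified Lean document; each statement's English description precedes it below -/
import Mathlib

section
/- Let X and Y be real normed vector spaces, let a ∈ X and 0 < r < ∞, and let f : X → Y be differentiable on the closed ball B̄(a,r) with derivative Df. Suppose γ ∈ [0,∞) is a Lipschitz constant for Df on B̄(a,r), i.e. ‖Df(x) − Df(y)‖ ≤ γ‖x − y‖ for all x, y ∈ B̄(a,r). Then for every positive integer Q and all points x₁, …, x_Q ∈ B̄(a,r) one has ‖(1/Q)·∑_{i=1}^Q f(x_i) − f((1/Q)·∑_{i=1}^Q x_i)‖ ≤ γ·r². -/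
open Set

/-- Taylor-type estimate: if `Df` is `γ`-Lipschitz (relative to `a`) on the closed ball,
then `‖f y - f a - Df a (y - a)‖ ≤ γ / 2 * ‖y - a‖ ^ 2` for `y` in the ball. -/
theorem quasi_linear_key {X Y : Type*} [NormedAddCommGroup X] [NormedSpace ℝ X]
    [NormedAddCommGroup Y] [NormedSpace ℝ Y]
    (a : X) (r : ℝ) (f : X → Y) (Df : X → X →L[ℝ] Y)
    (hdiff : ∀ x ∈ Metric.closedBall a r,
      HasFDerivWithinAt f (Df x) (Metric.closedBall a r) x)
    (γ : ℝ)
    (hlipa : ∀ x ∈ Metric.closedBall a r, ‖Df x - Df a‖ ≤ γ * ‖x - a‖)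
    (y : X) (hy : y ∈ Metric.closedBall a r) :
    ‖f y - f a - Df a (y - a)‖ ≤ γ / 2 * ‖y - a‖ ^ 2 := by
  have ha : a ∈ Metric.closedBall a r := Metric.mem_closedBall_self
    (by rcases Metric.mem_closedBall.1 hy with h; linarith [dist_nonneg (x := y) (y := a)])
  set p : ℝ → X := fun t => a + t • (y - a) with hp
  have hpmem : ∀ t ∈ Icc (0:ℝ) 1, p t ∈ Metric.closedBall a r := by
    intro t ht
    have hynorm : ‖y - a‖ ≤ r := by
      rw [← dist_eq_norm]; exact Metric.mem_closedBall.1 hy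
    simp only [hp, Metric.mem_closedBall, dist_eq_norm, add_sub_cancel_left, norm_smul,
      Real.norm_eq_abs, abs_of_nonneg ht.1]
    calc t * ‖y - a‖ ≤ 1 * ‖y - a‖ := by
          apply mul_le_mul_of_nonneg_right ht.2 (norm_nonneg _)
      _ ≤ r := by rw [one_mul]; exact hynorm
  set g : ℝ → Y := fun t => f (p t) - f a - t • (Df a (y - a)) with hg
  set g' : ℝ → Y := fun t => Df (p t) (y - a) - Df a (y - a) with hg'
  have hpderiv : ∀ t : ℝ, HasDerivAt p (y - a) t := by
    intro t
    simpa [hp] using ((hasDerivAt_id t).smul_const (y - a)).const_add a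
  have hgderiv : ∀ t ∈ Icc (0:ℝ) 1, HasDerivWithinAt g (g' t) (Icc 0 1) t := by
    intro t ht
    have h1 : HasDerivWithinAt (fun t => f (p t)) (Df (p t) (y - a)) (Icc 0 1) t := by
      have := (hdiff (p t) (hpmem t ht)).comp_hasDerivWithinAt t
        ((hpderiv t).hasDerivWithinAt) hpmem
      simpa [Function.comp_def] using this
    have h2 : HasDerivWithinAt (fun t : ℝ => t • (Df a (y - a))) (Df a (y - a)) (Icc 0 1) t :=
      ((hasDerivAt_id t).smul_const _).hasDerivWithinAt.congr_deriv (by simp)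
    simpa [hg, hg', Pi.sub_def] using (h1.sub (hasDerivWithinAt_const _ _ _)).sub h2
  have hbound : ∀ t ∈ Ico (0:ℝ) 1, ‖g' t‖ ≤ γ * ‖y - a‖ ^ 2 * t := by
    intro t ht
    have h1 : ‖g' t‖ ≤ ‖Df (p t) - Df a‖ * ‖y - a‖ := by
      have : g' t = (Df (p t) - Df a) (y - a) := by simp [hg']
      rw [this]; exact (Df (p t) - Df a).le_opNorm _
    have h2 : ‖Df (p t) - Df a‖ ≤ γ * (t * ‖y - a‖) := by
      have := hlipa (p t) (hpmem t ⟨ht.1, ht.2.le⟩)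
      simpa [hp, norm_smul, abs_of_nonneg ht.1] using this
    calc ‖g' t‖ ≤ ‖Df (p t) - Df a‖ * ‖y - a‖ := h1
      _ ≤ γ * (t * ‖y - a‖) * ‖y - a‖ := by
          apply mul_le_mul_of_nonneg_right h2 (norm_nonneg _)
      _ = γ * ‖y - a‖ ^ 2 * t := by ring
  set B : ℝ → ℝ := fun t => γ / 2 * ‖y - a‖ ^ 2 * t ^ 2 with hB
  have hBderiv : ∀ t : ℝ, HasDerivAt B (γ * ‖y - a‖ ^ 2 * t) t := by
    intro t
    have := (hasDerivAt_pow 2 t).const_mul (γ / 2 * ‖y - a‖ ^ 2)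
    refine this.congr_deriv ?_
    simp only [Nat.cast_ofNat, Nat.reduceSub, pow_one]
    ring
  have main : ∀ t ∈ Icc (0:ℝ) 1, ‖g t‖ ≤ B t := by
    refine image_norm_le_of_norm_deriv_right_le_deriv_boundary
      (f' := g') (fun t ht => (hgderiv t ht).continuousWithinAt) ?_ ?_ hBderiv ?_
    · intro t ht
      exact ((hgderiv t (Ico_subset_Icc_self ht)).mono_of_mem_nhdsWithin
        (Icc_mem_nhdsGE_of_mem ht))
    · simp [hg, hB, hp]
    · exact hbound
  have h1 := main 1 ⟨zero_le_one, le_refl 1⟩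
  simpa [hg, hB, hp] using h1

/-- If `f` is differentiable on a closed ball with derivative `Df`, and `Df` is
`γ`-Lipschitz on that ball, then the average of the values of `f` at `Q` points of the
ball differs from the value of `f` at the average point by at most `γ * r ^ 2`. -/
theorem quasi_linear_estimate {X Y : Type*} [NormedAddCommGroup X] [NormedSpace ℝ X]
    [NormedAddCommGroup Y] [NormedSpace ℝ Y]
    (a : X) (r : ℝ) (hr : 0 < r) (f : X → Y) (Df : X → X →L[ℝ] Y)
    (hdiff : ∀ x ∈ Metric.closedBall a r,
      HasFDerivWithinAt f (Df x) (Metric.closedBall a r) x)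
    (γ : ℝ) (hγ : 0 ≤ γ)
    (hlip : ∀ x ∈ Metric.closedBall a r, ∀ y ∈ Metric.closedBall a r,
      ‖Df x - Df y‖ ≤ γ * ‖x - y‖)
    (Q : ℕ) (hQ : 0 < Q) (x : Fin Q → X)
    (hx : ∀ i, x i ∈ Metric.closedBall a r) :
    ‖(1 / (Q : ℝ)) • ∑ i, f (x i) - f ((1 / (Q : ℝ)) • ∑ i, x i)‖ ≤ γ * r ^ 2 := by
  have ha : a ∈ Metric.closedBall a r := Metric.mem_closedBall_self hr.le
  have hlipa : ∀ z ∈ Metric.closedBall a r, ‖Df z - Df a‖ ≤ γ * ‖z - a‖ :=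
    fun z hz => hlip z hz a ha
  have key := quasi_linear_key a r f Df hdiff γ hlipa
  set m : X := (1 / (Q : ℝ)) • ∑ i, x i with hm
  have hQ' : (Q : ℝ) ≠ 0 := Nat.cast_ne_zero.2 hQ.ne'
  have hmmem : m ∈ Metric.closedBall a r := by
    have : m = ∑ i, (1 / (Q : ℝ)) • x i := by rw [hm, Finset.smul_sum]
    rw [this]
    refine (convex_closedBall a r).sum_mem (fun i _ => by positivity) ?_ (fun i _ => hx i)
    simp [Finset.sum_const, hQ']
  -- average of x i - a
  have havg : (1 / (Q : ℝ)) • ∑ i, (x i - a) = m - a := by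
    rw [Finset.sum_sub_distrib, smul_sub, hm]
    congr 1
    simp [Finset.sum_const, ← Nat.cast_smul_eq_nsmul ℝ, smul_smul, hQ']
  have hconst : (1 / (Q : ℝ)) • ∑ _i : Fin Q, f a = f a := by
    simp [Finset.sum_const, ← Nat.cast_smul_eq_nsmul ℝ, smul_smul, hQ']
  have hDfavg : (1 / (Q : ℝ)) • ∑ i, Df a (x i - a) = Df a (m - a) := by
    rw [← map_sum, ← map_smul, havg]
  have hsplit : (1 / (Q : ℝ)) • ∑ i, f (x i) - f m
      = (1 / (Q : ℝ)) • ∑ i, (f (x i) - f a - Df a (x i - a))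
        - (f m - f a - Df a (m - a)) := by
    rw [Finset.sum_sub_distrib, Finset.sum_sub_distrib, smul_sub, smul_sub, hconst, hDfavg]
    abel
  rw [hsplit]
  have hterm : ∀ i, ‖f (x i) - f a - Df a (x i - a)‖ ≤ γ / 2 * r ^ 2 := by
    intro i
    refine (key (x i) (hx i)).trans ?_
    have : ‖x i - a‖ ≤ r := by rw [← dist_eq_norm]; exact Metric.mem_closedBall.1 (hx i)
    have h2 : ‖x i - a‖ ^ 2 ≤ r ^ 2 := by
      apply pow_le_pow_left₀ (norm_nonneg _) this
    nlinarith
  have hsum : ‖(1 / (Q : ℝ)) • ∑ i, (f (x i) - f a - Df a (x i - a))‖ ≤ γ / 2 * r ^ 2 := by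
    rw [norm_smul]
    have h1 : ‖∑ i, (f (x i) - f a - Df a (x i - a))‖ ≤ (Q : ℝ) * (γ / 2 * r ^ 2) := by
      refine (norm_sum_le _ _).trans ?_
      calc ∑ i, ‖f (x i) - f a - Df a (x i - a)‖ ≤ ∑ _i : Fin Q, γ / 2 * r ^ 2 :=
            Finset.sum_le_sum (fun i _ => hterm i)
        _ = (Q : ℝ) * (γ / 2 * r ^ 2) := by simp [Finset.sum_const, mul_comm]
    have hpos : ‖(1 / (Q : ℝ))‖ = 1 / (Q : ℝ) := by
      rw [Real.norm_eq_abs, abs_of_pos]; positivity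
    rw [hpos]
    calc 1 / (Q : ℝ) * ‖∑ i, (f (x i) - f a - Df a (x i - a))‖
        ≤ 1 / (Q : ℝ) * ((Q : ℝ) * (γ / 2 * r ^ 2)) := by
          apply mul_le_mul_of_nonneg_left h1 (by positivity)
      _ = γ / 2 * r ^ 2 := by field_simp
  have hmterm : ‖f m - f a - Df a (m - a)‖ ≤ γ / 2 * r ^ 2 := by
    refine (key m hmmem).trans ?_
    have : ‖m - a‖ ≤ r := by rw [← dist_eq_norm]; exact Metric.mem_closedBall.1 hmmem
    have h2 : ‖m - a‖ ^ 2 ≤ r ^ 2 := pow_le_pow_left₀ (norm_nonneg _) this 2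
    nlinarith
  calc ‖(1 / (Q : ℝ)) • ∑ i, (f (x i) - f a - Df a (x i - a)) - (f m - f a - Df a (m - a))‖
      ≤ ‖(1 / (Q : ℝ)) • ∑ i, (f (x i) - f a - Df a (x i - a))‖
        + ‖f m - f a - Df a (m - a)‖ := norm_sub_le _ _
    _ ≤ γ / 2 * r ^ 2 + γ / 2 * r ^ 2 := add_le_add hsum hmterm
    _ = γ * r ^ 2 := by ring
end

section
/- There exists a universal constant Γ ∈ (0,∞) such that for every real R ≥ 2, ∫_{N ∩ B̄(0,R)} ( |q(z)| − log(2R) )² dℋ²(z) ≤ Γ·R². -/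
open MeasureTheory Metric
open scoped ENNReal NNReal

/-- The profile function of the catenoid-like surface: `f t = log (t + √(t² - 1))`. -/
noncomputable def catProfile (t : ℝ) : ℝ := Real.log (t + Real.sqrt (t ^ 2 - 1))

/-- The norm of the horizontal projection `p z = (z₁, z₂)` of `z ∈ ℝ³`. -/
noncomputable def horizNorm (z : EuclideanSpace ℝ (Fin 3)) : ℝ :=
  Real.sqrt ((z 0) ^ 2 + (z 1) ^ 2)

/-- The catenoid-like surface `N = {z : ‖p z‖ ≥ 1 and |q z| = f (‖p z‖)}`. -/
def catSurface : Set (EuclideanSpace ℝ (Fin 3)) :=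
  {z | 1 ≤ horizNorm z ∧ |z 2| = catProfile (horizNorm z)}

namespace CatAux

lemma one_le_arg {t : ℝ} (ht : 1 ≤ t) : 1 ≤ t + Real.sqrt (t ^ 2 - 1) := by
  have := Real.sqrt_nonneg (t ^ 2 - 1); linarith

lemma arg_pos {t : ℝ} (ht : 1 ≤ t) : 0 < t + Real.sqrt (t ^ 2 - 1) := by
  linarith [one_le_arg ht]

lemma catProfile_nonneg {t : ℝ} (ht : 1 ≤ t) : 0 ≤ catProfile t :=
  Real.log_nonneg (one_le_arg ht)

lemma log_le_catProfile {t : ℝ} (ht : 1 ≤ t) : Real.log t ≤ catProfile t := by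
  apply Real.log_le_log (by linarith)
  have := Real.sqrt_nonneg (t ^ 2 - 1); linarith

lemma catProfile_le_log {t : ℝ} (ht : 1 ≤ t) : catProfile t ≤ Real.log (2 * t) := by
  apply Real.log_le_log (arg_pos ht)
  have h1 : Real.sqrt (t ^ 2 - 1) ≤ t := by
    have : Real.sqrt (t ^ 2 - 1) ≤ Real.sqrt (t ^ 2) := Real.sqrt_le_sqrt (by linarith)
    rwa [Real.sqrt_sq (by linarith)] at this
  linarith

lemma catProfile_mono {a b : ℝ} (ha : 1 ≤ a) (hab : a ≤ b) :
    catProfile a ≤ catProfile b := by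
  apply Real.log_le_log (arg_pos ha)
  have : Real.sqrt (a ^ 2 - 1) ≤ Real.sqrt (b ^ 2 - 1) :=
    Real.sqrt_le_sqrt (by nlinarith)
  linarith

lemma cosh_catProfile {t : ℝ} (ht : 1 ≤ t) : Real.cosh (catProfile t) = t := by
  have h0 : 0 < t + Real.sqrt (t ^ 2 - 1) := arg_pos ht
  have hs : Real.sqrt (t ^ 2 - 1) ^ 2 = t ^ 2 - 1 := Real.sq_sqrt (by nlinarith)
  rw [catProfile, Real.cosh_log h0]
  have hinv : (t + Real.sqrt (t ^ 2 - 1))⁻¹ = t - Real.sqrt (t ^ 2 - 1) := by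
    apply inv_eq_of_mul_eq_one_right; nlinarith
  rw [hinv]; ring

/-- Parametrization of one sheet of the catenoid. -/
noncomputable def catPar (ε : ℝ) (w : Fin 2 → ℝ) : EuclideanSpace ℝ (Fin 3) :=
  WithLp.toLp 2 ![Real.cosh (w 1) * Real.cos (w 0), Real.cosh (w 1) * Real.sin (w 0), ε * w 1]

lemma catPar_apply (ε : ℝ) (w : Fin 2 → ℝ) :
    catPar ε w 0 = Real.cosh (w 1) * Real.cos (w 0) ∧
    catPar ε w 1 = Real.cosh (w 1) * Real.sin (w 0) ∧
    catPar ε w 2 = ε * w 1 := by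
  refine ⟨rfl, rfl, rfl⟩

lemma abs_cos_sub_cos (a b : ℝ) : |Real.cos a - Real.cos b| ≤ |a - b| := by
  rw [Real.cos_sub_cos]
  have h1 : |Real.sin ((a - b) / 2)| ≤ |(a - b) / 2| := Real.abs_sin_le_abs
  have h2 : |Real.sin ((a + b) / 2)| ≤ 1 := Real.abs_sin_le_one _
  have h3 : |(a - b) / 2| = |a - b| / 2 := by rw [abs_div]; norm_num
  rw [abs_mul, abs_mul]
  have h4 : |(-2 : ℝ)| = 2 := by norm_num
  rw [h4]
  nlinarith [abs_nonneg (Real.sin ((a - b) / 2)), abs_nonneg (a - b),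
    abs_nonneg (Real.sin ((a + b) / 2))]

lemma abs_sin_sub_sin (a b : ℝ) : |Real.sin a - Real.sin b| ≤ |a - b| := by
  rw [Real.sin_sub_sin]
  have h1 : |Real.sin ((a - b) / 2)| ≤ |(a - b) / 2| := Real.abs_sin_le_abs
  have h2 : |Real.cos ((a + b) / 2)| ≤ 1 := Real.abs_cos_le_one _
  have h3 : |(a - b) / 2| = |a - b| / 2 := by rw [abs_div]; norm_num
  rw [abs_mul, abs_mul]
  have h4 : |(2 : ℝ)| = 2 := by norm_num
  rw [h4]
  nlinarith [abs_nonneg (Real.sin ((a - b) / 2)), abs_nonneg (a - b),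
    abs_nonneg (Real.cos ((a + b) / 2))]

lemma abs_cosh_sub_cosh {H a b : ℝ} (ha : a ∈ Set.Icc (-H) H) (hb : b ∈ Set.Icc (-H) H) :
    |Real.cosh a - Real.cosh b| ≤ Real.cosh H * |a - b| := by
  have key := (convex_Icc (-H) H).norm_image_sub_le_of_norm_deriv_le
    (f := Real.cosh) (C := Real.cosh H) (fun x _ => Real.differentiable_cosh x)
    (fun x hx => ?_) hb ha
  · simpa [Real.norm_eq_abs] using key
  · rw [Real.deriv_cosh, Real.norm_eq_abs, Real.abs_sinh]
    calc Real.sinh |x| ≤ Real.sinh H := by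
          rw [Real.sinh_le_sinh]
          rcases hx with ⟨h1, h2⟩
          rw [abs_le]; exact ⟨h1, h2⟩
      _ ≤ Real.cosh H := by
          have := Real.cosh_sub_sinh H
          have := Real.exp_pos (-H)
          linarith

lemma cosh_le_of_mem {H a : ℝ} (ha : a ∈ Set.Icc (-H) H) : Real.cosh a ≤ Real.cosh H := by
  rw [Real.cosh_le_cosh]
  rcases ha with ⟨h1, h2⟩
  have hH : 0 ≤ H := by linarith
  rw [abs_le, abs_of_nonneg hH]; exact ⟨by linarith, h2⟩

lemma catPar_lipschitz (ε : ℝ) (hε : |ε| ≤ 1) (H : ℝ) :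
    LipschitzOnWith (5 * Real.cosh H).toNNReal (catPar ε)
      {w : Fin 2 → ℝ | w 1 ∈ Set.Icc (-H) H} := by
  rw [lipschitzOnWith_iff_dist_le_mul]
  intro x hx y hy
  have hd0 : |x 0 - y 0| ≤ dist x y := by
    simpa [Real.dist_eq] using dist_le_pi_dist x y 0
  have hd1 : |x 1 - y 1| ≤ dist x y := by
    simpa [Real.dist_eq] using dist_le_pi_dist x y 1
  have hdnn : 0 ≤ dist x y := dist_nonneg
  have hcoshH : 1 ≤ Real.cosh H := Real.one_le_cosh H
  have hcc : |Real.cosh (x 1) - Real.cosh (y 1)| ≤ Real.cosh H * |x 1 - y 1| :=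
    abs_cosh_sub_cosh hx hy
  have hcy : Real.cosh (y 1) ≤ Real.cosh H := cosh_le_of_mem hy
  have hcy0 : 0 < Real.cosh (y 1) := Real.cosh_pos _
  -- coordinate differences
  have h0 : |catPar ε x 0 - catPar ε y 0| ≤ 2 * Real.cosh H * dist x y := by
    have : catPar ε x 0 - catPar ε y 0 =
        (Real.cosh (x 1) - Real.cosh (y 1)) * Real.cos (x 0)
          + Real.cosh (y 1) * (Real.cos (x 0) - Real.cos (y 0)) := by
      rw [(catPar_apply ε x).1, (catPar_apply ε y).1]; ring
    rw [this]
    calc |_ + _| ≤ |(Real.cosh (x 1) - Real.cosh (y 1)) * Real.cos (x 0)|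
          + |Real.cosh (y 1) * (Real.cos (x 0) - Real.cos (y 0))| := abs_add_le _ _
      _ ≤ Real.cosh H * |x 1 - y 1| * 1 + Real.cosh H * |x 0 - y 0| := by
          rw [abs_mul, abs_mul]
          have := Real.abs_cos_le_one (x 0)
          have := abs_cos_sub_cos (x 0) (y 0)
          have h1 : |Real.cosh (y 1)| = Real.cosh (y 1) := abs_of_pos hcy0
          nlinarith [abs_nonneg (Real.cosh (x 1) - Real.cosh (y 1)),
            abs_nonneg (Real.cos (x 0)), abs_nonneg (Real.cos (x 0) - Real.cos (y 0)),
            abs_nonneg (x 1 - y 1)]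
      _ ≤ 2 * Real.cosh H * dist x y := by nlinarith
  have h1 : |catPar ε x 1 - catPar ε y 1| ≤ 2 * Real.cosh H * dist x y := by
    have : catPar ε x 1 - catPar ε y 1 =
        (Real.cosh (x 1) - Real.cosh (y 1)) * Real.sin (x 0)
          + Real.cosh (y 1) * (Real.sin (x 0) - Real.sin (y 0)) := by
      rw [(catPar_apply ε x).2.1, (catPar_apply ε y).2.1]; ring
    rw [this]
    calc |_ + _| ≤ |(Real.cosh (x 1) - Real.cosh (y 1)) * Real.sin (x 0)|
          + |Real.cosh (y 1) * (Real.sin (x 0) - Real.sin (y 0))| := abs_add_le _ _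
      _ ≤ Real.cosh H * |x 1 - y 1| * 1 + Real.cosh H * |x 0 - y 0| := by
          rw [abs_mul, abs_mul]
          have := Real.abs_sin_le_one (x 0)
          have := abs_sin_sub_sin (x 0) (y 0)
          have h1 : |Real.cosh (y 1)| = Real.cosh (y 1) := abs_of_pos hcy0
          nlinarith [abs_nonneg (Real.cosh (x 1) - Real.cosh (y 1)),
            abs_nonneg (Real.sin (x 0)), abs_nonneg (Real.sin (x 0) - Real.sin (y 0)),
            abs_nonneg (x 1 - y 1)]
      _ ≤ 2 * Real.cosh H * dist x y := by nlinarith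
  have h2 : |catPar ε x 2 - catPar ε y 2| ≤ Real.cosh H * dist x y := by
    have : catPar ε x 2 - catPar ε y 2 = ε * (x 1 - y 1) := by
      rw [(catPar_apply ε x).2.2, (catPar_apply ε y).2.2]; ring
    rw [this, abs_mul]
    nlinarith [abs_nonneg (x 1 - y 1), abs_nonneg ε]
  -- assemble
  have hdist : dist (catPar ε x) (catPar ε y) ≤
      |catPar ε x 0 - catPar ε y 0| + |catPar ε x 1 - catPar ε y 1|
        + |catPar ε x 2 - catPar ε y 2| := by
    rw [EuclideanSpace.dist_eq]
    rw [Fin.sum_univ_three]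
    set A := catPar ε x 0 - catPar ε y 0
    set B := catPar ε x 1 - catPar ε y 1
    set C := catPar ε x 2 - catPar ε y 2
    have : dist (catPar ε x 0) (catPar ε y 0) = |A| := Real.dist_eq _ _
    have hB : dist (catPar ε x 1) (catPar ε y 1) = |B| := Real.dist_eq _ _
    have hC : dist (catPar ε x 2) (catPar ε y 2) = |C| := Real.dist_eq _ _
    rw [this, hB, hC]
    have hsum : |A| ^ 2 + |B| ^ 2 + |C| ^ 2 ≤ (|A| + |B| + |C|) ^ 2 := by
      nlinarith [abs_nonneg A, abs_nonneg B, abs_nonneg C]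
    calc Real.sqrt (|A| ^ 2 + |B| ^ 2 + |C| ^ 2) ≤
        Real.sqrt ((|A| + |B| + |C|) ^ 2) := Real.sqrt_le_sqrt hsum
      _ = |A| + |B| + |C| := Real.sqrt_sq (by positivity)
  have hK : ((5 * Real.cosh H).toNNReal : ℝ) = 5 * Real.cosh H :=
    Real.coe_toNNReal _ (by nlinarith)
  rw [hK]
  calc dist (catPar ε x) (catPar ε y) ≤ _ := hdist
    _ ≤ 2 * Real.cosh H * dist x y + 2 * Real.cosh H * dist x y
        + Real.cosh H * dist x y := by linarith
    _ = 5 * Real.cosh H * dist x y := by ring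

lemma cover {a b : ℝ} (ha : 1 ≤ a) {z : EuclideanSpace ℝ (Fin 3)} (hz : z ∈ catSurface)
    (h1 : a ≤ horizNorm z) (h2 : horizNorm z ≤ b) :
    z ∈ catPar 1 '' Set.Icc ![-Real.pi, catProfile a] ![Real.pi, catProfile b] ∪
      catPar (-1) '' Set.Icc ![-Real.pi, catProfile a] ![Real.pi, catProfile b] := by
  set t := horizNorm z with ht
  have ht1 : 1 ≤ t := hz.1
  have ht0 : 0 < t := by linarith
  set c : ℂ := ⟨z 0, z 1⟩ with hc
  have habs : ‖c‖ = t := by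
    rw [Complex.norm_def, Complex.normSq_mk, ht, horizNorm]
    ring_nf
  have hc0 : c ≠ 0 := by
    intro h
    rw [h, norm_zero] at habs
    linarith
  set θ := Complex.arg c with hθ
  have hcos : Real.cos θ = z 0 / t := by rw [hθ, Complex.cos_arg hc0, habs]
  have hsin : Real.sin θ = z 1 / t := by rw [hθ, Complex.sin_arg, habs]
  set h := |z 2| with hh
  have hht : h = catProfile t := hz.2
  have hcosh : Real.cosh h = t := by rw [hht]; exact cosh_catProfile ht1
  have hθmem : θ ∈ Set.Icc (-Real.pi) Real.pi :=
    Set.Ioc_subset_Icc_self (Complex.arg_mem_Ioc c)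
  have hhmem : h ∈ Set.Icc (catProfile a) (catProfile b) := by
    rw [hht]
    exact ⟨catProfile_mono ha h1, catProfile_mono ht1 h2⟩
  have hwmem : (![θ, h] : Fin 2 → ℝ) ∈
      Set.Icc ![-Real.pi, catProfile a] ![Real.pi, catProfile b] := by
    constructor <;> intro i <;> fin_cases i <;>
      simp_all [Matrix.cons_val_zero, Matrix.cons_val_one, Matrix.head_cons]
  rcases abs_choice (z 2) with hsign | hsign
  · left
    refine ⟨![θ, h], hwmem, ?_⟩
    ext i
    fin_cases i
    · show Real.cosh h * Real.cos θ = z 0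
      rw [hcosh, hcos]; field_simp
    · show Real.cosh h * Real.sin θ = z 1
      rw [hcosh, hsin]; field_simp
    · show (1 : ℝ) * h = z 2
      rw [one_mul]; exact hsign
  · right
    refine ⟨![θ, h], hwmem, ?_⟩
    ext i
    fin_cases i
    · show Real.cosh h * Real.cos θ = z 0
      rw [hcosh, hcos]; field_simp
    · show Real.cosh h * Real.sin θ = z 1
      rw [hcosh, hsin]; field_simp
    · show (-1 : ℝ) * h = z 2
      rw [hh]; linarith [hsign]

lemma annulus_measure {a b : ℝ} (ha : 1 ≤ a) (hab : a ≤ b) :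
    μH[2] (catSurface ∩ {z | a ≤ horizNorm z ∧ horizNorm z ≤ b})
      ≤ ENNReal.ofReal (400 * (b ^ 2 * (catProfile b - catProfile a))) := by
  have hb1 : 1 ≤ b := le_trans ha hab
  set H := catProfile b with hH
  set D : Set (Fin 2 → ℝ) := Set.Icc ![-Real.pi, catProfile a] ![Real.pi, H] with hD
  have hDsub : D ⊆ {w : Fin 2 → ℝ | w 1 ∈ Set.Icc (-H) H} := by
    rintro w ⟨hw1, hw2⟩
    have h1 := hw1 1
    have h2 := hw2 1
    simp only [Matrix.cons_val_one, Matrix.head_cons, Matrix.cons_val_zero] at h1 h2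
    have h0 : 0 ≤ catProfile a := catProfile_nonneg ha
    have hH0 : 0 ≤ H := le_trans h0 (catProfile_mono ha hab)
    exact ⟨by linarith, h2⟩
  have hcover : catSurface ∩ {z | a ≤ horizNorm z ∧ horizNorm z ≤ b} ⊆
      catPar 1 '' D ∪ catPar (-1) '' D := by
    rintro z ⟨hz, hz1, hz2⟩
    exact cover ha hz hz1 hz2
  have hΔ : 0 ≤ H - catProfile a := by
    have := catProfile_mono ha hab; linarith
  -- measure of the parameter domain
  have hμD : μH[2] D = ENNReal.ofReal (2 * Real.pi) * ENNReal.ofReal (H - catProfile a) := by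
    have hvol : (μH[2] : Measure (Fin 2 → ℝ)) = volume := by
      have h := MeasureTheory.hausdorffMeasure_pi_real (ι := Fin 2)
      simpa using h
    rw [hD, hvol, Real.volume_Icc_pi, Fin.prod_univ_two]
    simp only [Matrix.cons_val_zero, Matrix.cons_val_one, Matrix.head_cons]
    have h2 : Real.pi - -Real.pi = 2 * Real.pi := by ring
    rw [h2]
  -- image bound
  have himg : ∀ ε : ℝ, |ε| ≤ 1 →
      μH[2] (catPar ε '' D) ≤ ENNReal.ofReal (200 * (b ^ 2 * (H - catProfile a))) := by
    intro ε hε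
    have hlip : LipschitzOnWith (5 * Real.cosh H).toNNReal (catPar ε) D :=
      (catPar_lipschitz ε hε H).mono hDsub
    have := hlip.hausdorffMeasure_image_le (d := 2) (by norm_num)
    refine le_trans this ?_
    have hcoshb : Real.cosh H = b := cosh_catProfile hb1
    have hKnonneg : (0:ℝ) ≤ 5 * Real.cosh H := by positivity
    have hKcast : ((5 * Real.cosh H).toNNReal : ℝ≥0∞) = ENNReal.ofReal (5 * b) := by
      simp [ENNReal.ofReal, hcoshb]
    rw [hKcast, hμD]
    have hb5 : (0:ℝ) ≤ 5 * b := by linarith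
    have hrpow : ENNReal.ofReal (5 * b) ^ (2:ℝ) = ENNReal.ofReal ((5 * b) ^ (2:ℕ)) := by
      rw [ENNReal.ofReal_rpow_of_nonneg hb5 (by norm_num)]
      congr 1
      rw [show ((2:ℝ)) = ((2:ℕ):ℝ) by norm_num, Real.rpow_natCast]
    rw [hrpow, ← ENNReal.ofReal_mul (by positivity), ← ENNReal.ofReal_mul (by positivity)]
    apply ENNReal.ofReal_le_ofReal
    have hpi : Real.pi ≤ 4 := by linarith [Real.pi_le_four]
    have hb0 : (0:ℝ) ≤ b := by linarith
    have hkey : (0:ℝ) ≤ (200 - 50 * Real.pi) * (b ^ 2 * (H - catProfile a)) :=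
      mul_nonneg (by linarith) (mul_nonneg (sq_nonneg b) hΔ)
    have expand : (5 * b) ^ 2 * (2 * Real.pi * (H - catProfile a))
        = 50 * Real.pi * (b ^ 2 * (H - catProfile a)) := by ring
    rw [expand]
    linarith [hkey]
  calc μH[2] (catSurface ∩ {z | a ≤ horizNorm z ∧ horizNorm z ≤ b})
      ≤ μH[2] (catPar 1 '' D ∪ catPar (-1) '' D) := measure_mono hcover
    _ ≤ μH[2] (catPar 1 '' D) + μH[2] (catPar (-1) '' D) := measure_union_le _ _
    _ ≤ ENNReal.ofReal (200 * (b ^ 2 * (H - catProfile a)))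
        + ENNReal.ofReal (200 * (b ^ 2 * (H - catProfile a))) := by
        gcongr
        · exact himg 1 (by norm_num)
        · exact himg (-1) (by norm_num)
    _ = ENNReal.ofReal (400 * (b ^ 2 * (catProfile b - catProfile a))) := by
        rw [← ENNReal.ofReal_add (by positivity) (by positivity)]
        congr 1
        ring

lemma continuous_horizNorm : Continuous horizNorm := by
  have h0 : Continuous fun z : EuclideanSpace ℝ (Fin 3) => z 0 :=
    (EuclideanSpace.proj (0 : Fin 3)).continuous
  have h1 : Continuous fun z : EuclideanSpace ℝ (Fin 3) => z 1 :=
    (EuclideanSpace.proj (1 : Fin 3)).continuous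
  exact Real.continuous_sqrt.comp ((h0.pow 2).add (h1.pow 2))

lemma measurableSet_catSurface : MeasurableSet catSurface := by
  have hn : Continuous horizNorm := continuous_horizNorm
  have h1 : MeasurableSet {z : EuclideanSpace ℝ (Fin 3) | 1 ≤ horizNorm z} :=
    measurableSet_le measurable_const hn.measurable
  have hq : Measurable fun z : EuclideanSpace ℝ (Fin 3) => |z 2| :=
    (continuous_abs.comp (EuclideanSpace.proj (2 : Fin 3)).continuous).measurable
  have hcp : Measurable fun z : EuclideanSpace ℝ (Fin 3) => catProfile (horizNorm z) := by
    have hins : Continuous fun z : EuclideanSpace ℝ (Fin 3) =>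
        horizNorm z + Real.sqrt (horizNorm z ^ 2 - 1) :=
      hn.add (Real.continuous_sqrt.comp ((hn.pow 2).sub continuous_const))
    exact Real.measurable_log.comp hins.measurable
  have h2 : MeasurableSet {z : EuclideanSpace ℝ (Fin 3) |
      |z 2| = catProfile (horizNorm z)} := measurableSet_eq_fun hq hcp
  rw [catSurface, Set.setOf_and]
  exact h1.inter h2

lemma nat_sq_le (j : ℕ) : (j + 2) ^ 2 + 1 ≤ 8 * 2 ^ j := by
  induction j with
  | zero => norm_num
  | succ n ih =>
    have h : (n + 1 + 2) ^ 2 + 1 ≤ 2 * ((n + 2) ^ 2 + 1) := by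
      have hexp : (n + 1 + 2) ^ 2 = n ^ 2 + 6 * n + 9 := by ring
      have hexp2 : (n + 2) ^ 2 = n ^ 2 + 4 * n + 4 := by ring
      rw [hexp, hexp2]
      omega
    calc (n + 1 + 2) ^ 2 + 1 ≤ 2 * ((n + 2) ^ 2 + 1) := h
      _ ≤ 2 * (8 * 2 ^ n) := by omega
      _ = 8 * 2 ^ (n + 1) := by ring

end CatAux

/-- There is a universal constant `Γ ∈ (0, ∞)` such that for all `R ≥ 2`,
`∫_{N ∩ B̄(0,R)} (|q z| - log (2R))² dℋ² ≤ Γ R²`. -/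
theorem catenoid_height_estimate :
    ∃ Γ : ℝ, 0 < Γ ∧ ∀ R : ℝ, 2 ≤ R →
      ∫⁻ z in catSurface ∩ closedBall (0 : EuclideanSpace ℝ (Fin 3)) R,
          ENNReal.ofReal ((|z 2| - Real.log (2 * R)) ^ 2) ∂ μH[2] ≤
        ENNReal.ofReal (Γ * R ^ 2) := by
  refine ⟨12800, by norm_num, fun R hR => ?_⟩
  have hR0 : (0:ℝ) < R := by linarith
  set F : EuclideanSpace ℝ (Fin 3) → ℝ≥0∞ :=
    fun z => ENNReal.ofReal ((|z 2| - Real.log (2 * R)) ^ 2) with hF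
  set A : ℕ → Set (EuclideanSpace ℝ (Fin 3)) := fun j =>
    catSurface ∩ {z | max 1 (R / 2 ^ (j + 1)) ≤ horizNorm z ∧ horizNorm z ≤ R / 2 ^ j}
    with hA
  have hAmeas : ∀ j, MeasurableSet (A j) := by
    intro j
    apply CatAux.measurableSet_catSurface.inter
    rw [Set.setOf_and]
    exact (measurableSet_le measurable_const CatAux.continuous_horizNorm.measurable).inter
      (measurableSet_le CatAux.continuous_horizNorm.measurable measurable_const)
  have hcover : catSurface ∩ closedBall (0 : EuclideanSpace ℝ (Fin 3)) R ⊆ ⋃ j, A j := by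
    rintro z ⟨hzN, hzB⟩
    set t := horizNorm z with htdef
    have ht1 : 1 ≤ t := hzN.1
    have ht0 : 0 < t := by linarith
    have hzt : t ≤ R := by
      have hznorm : ‖z‖ ≤ R := by simpa [dist_zero_right] using mem_closedBall.mp hzB
      have hle : horizNorm z ≤ ‖z‖ := by
        rw [EuclideanSpace.norm_eq, horizNorm]
        apply Real.sqrt_le_sqrt
        rw [Fin.sum_univ_three]
        simp only [Real.norm_eq_abs, sq_abs]
        nlinarith [sq_nonneg (z 2)]
      linarith
    set n := Nat.floor (R / t) with hn
    have hRt1 : (1:ℝ) ≤ R / t := (one_le_div ht0).mpr hzt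
    have hn1 : 1 ≤ n := Nat.le_floor (by exact_mod_cast hRt1)
    set j := Nat.log 2 n with hj
    have hlow : (2:ℝ) ^ j ≤ R / t := by
      have h1 : (2:ℕ) ^ j ≤ n := Nat.pow_log_le_self 2 (by omega)
      have h2 : (n:ℝ) ≤ R / t := Nat.floor_le (by positivity)
      calc ((2:ℝ))^j = ((2^j : ℕ) : ℝ) := by push_cast; ring
        _ ≤ (n:ℝ) := by exact_mod_cast h1
        _ ≤ R / t := h2
    have hhigh : R / t < (2:ℝ) ^ (j + 1) := by
      have h1 : n < 2 ^ (j + 1) := Nat.lt_pow_succ_log_self (by norm_num) n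
      have h2 : R / t < n + 1 := Nat.lt_floor_add_one _
      have h3 : (n:ℝ) + 1 ≤ ((2:ℝ)) ^ (j + 1) := by
        have h4 : n + 1 ≤ 2 ^ (j + 1) := h1
        exact_mod_cast h4
      linarith
    have hmem1 : max 1 (R / 2 ^ (j + 1)) ≤ t := by
      apply max_le ht1
      rw [div_le_iff₀ (by positivity)]
      rw [div_lt_iff₀ ht0] at hhigh
      linarith
    have hmem2 : t ≤ R / 2 ^ j := by
      rw [le_div_iff₀ (by positivity)]
      rw [le_div_iff₀ ht0] at hlow
      linarith
    exact Set.mem_iUnion.mpr ⟨j, hzN, hmem1, hmem2⟩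
  have hterm : ∀ j : ℕ, ∫⁻ z in A j, F z ∂μH[2]
      ≤ ENNReal.ofReal (6400 * R ^ 2) * 2⁻¹ ^ j := by
    intro j
    by_cases hbj : 1 ≤ R / 2 ^ j
    · set b := R / 2 ^ j with hbdef
      set a := max 1 (R / 2 ^ (j + 1)) with hadef
      have ha : 1 ≤ a := le_max_left _ _
      have ha' : R / 2 ^ (j + 1) ≤ a := le_max_right _ _
      have h2j : (0:ℝ) < 2 ^ j := by positivity
      have h2j1 : (0:ℝ) < 2 ^ (j + 1) := by positivity
      have hb2a : b ≤ 2 * a := by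
        have hre : R / 2 ^ (j + 1) * 2 = b := by
          rw [hbdef]; field_simp; ring
        linarith
      have hab : a ≤ b := by
        apply max_le hbj
        apply div_le_div_of_nonneg_left hR0.le h2j
        exact pow_le_pow_right₀ (by norm_num) (by omega)
      have hb1 : 1 ≤ b := le_trans ha hab
      have hbR : b ≤ R := by
        rw [hbdef]
        apply div_le_self hR0.le
        calc (1:ℝ) = 2 ^ 0 := by norm_num
          _ ≤ 2 ^ j := pow_le_pow_right₀ (by norm_num) (Nat.zero_le j)
      -- pointwise weight bound
      have hw : ∀ z ∈ A j, F z ≤ ENNReal.ofReal (((j:ℝ) + 2) ^ 2) := by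
        rintro z ⟨hzN, hz1, hz2⟩
        apply ENNReal.ofReal_le_ofReal
        set t := horizNorm z with htdef
        have ht1 : 1 ≤ t := hzN.1
        have hzq : |z 2| = catProfile t := hzN.2
        have hta : a ≤ t := hz1
        have htb : t ≤ b := hz2
        have hup : |z 2| ≤ Real.log (2 * R) := by
          rw [hzq]
          refine le_trans (CatAux.catProfile_le_log ht1) ?_
          exact Real.log_le_log (by linarith) (by linarith)
        have h2Ra : 2 * R ≤ 2 ^ (j + 2) * a := by
          have h5 : 2 ^ (j + 2) * (R / 2 ^ (j + 1)) = 2 * R := by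
            field_simp; ring
          nlinarith [pow_pos (show (0:ℝ) < 2 by norm_num) (j + 2)]
        have hlo : Real.log (2 * R) - |z 2| ≤ ((j:ℝ) + 2) * Real.log 2 := by
          rw [hzq]
          have h1 : Real.log t ≤ catProfile t := CatAux.log_le_catProfile ht1
          have h2 : Real.log a ≤ Real.log t := Real.log_le_log (by linarith) hta
          have h3 : Real.log (2 * R) ≤ Real.log (2 ^ (j + 2) * a) :=
            Real.log_le_log (by linarith) h2Ra
          have h4 : Real.log (2 ^ (j + 2) * a) = ((j:ℝ) + 2) * Real.log 2 + Real.log a := by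
            rw [Real.log_mul (by positivity) (by linarith), Real.log_pow]
            push_cast; ring
          linarith
        have hlog2 : Real.log 2 ≤ 1 := by
          have := Real.log_two_lt_d9; linarith
        have hj2 : (0:ℝ) ≤ (j:ℝ) + 2 := by positivity
        have hlo' : Real.log (2 * R) - |z 2| ≤ (j:ℝ) + 2 := by nlinarith
        apply sq_le_sq'
        · linarith
        · linarith
      -- measure bound
      have hΔ2 : catProfile b - catProfile a ≤ 2 := by
        have h1 : catProfile b ≤ Real.log (2 * b) := CatAux.catProfile_le_log hb1
        have h2 : Real.log (2 * b) ≤ Real.log (4 * a) :=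
          Real.log_le_log (by linarith) (by linarith)
        have h3 : Real.log (4 * a) = Real.log 4 + Real.log a := by
          rw [Real.log_mul (by norm_num) (by linarith)]
        have h4 : Real.log a ≤ catProfile a := CatAux.log_le_catProfile ha
        have h5 : Real.log 4 = 2 * Real.log 2 := by
          rw [show (4:ℝ) = 2 ^ 2 by norm_num, Real.log_pow]; push_cast; ring
        have hlog2 : Real.log 2 ≤ 1 := by
          have := Real.log_two_lt_d9; linarith
        linarith
      have hAset : A j = catSurface ∩ {z | a ≤ horizNorm z ∧ horizNorm z ≤ b} := rfl
      have hmeasb : μH[2] (A j) ≤ ENNReal.ofReal (800 * b ^ 2) := by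
        rw [hAset]
        refine le_trans (CatAux.annulus_measure ha hab) (ENNReal.ofReal_le_ofReal ?_)
        have hΔ0 : 0 ≤ catProfile b - catProfile a := by
          have := CatAux.catProfile_mono ha hab; linarith
        nlinarith [sq_nonneg b]
      calc ∫⁻ z in A j, F z ∂μH[2]
          ≤ ∫⁻ _ in A j, ENNReal.ofReal (((j:ℝ) + 2) ^ 2) ∂μH[2] :=
            setLIntegral_mono' (hAmeas j) hw
        _ = ENNReal.ofReal (((j:ℝ) + 2) ^ 2) * μH[2] (A j) := setLIntegral_const _ _
        _ ≤ ENNReal.ofReal (((j:ℝ) + 2) ^ 2) * ENNReal.ofReal (800 * b ^ 2) := by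
            gcongr
        _ = ENNReal.ofReal (((j:ℝ) + 2) ^ 2 * (800 * b ^ 2)) := by
            rw [← ENNReal.ofReal_mul (by positivity)]
        _ ≤ ENNReal.ofReal (6400 * R ^ 2 * (1 / 2) ^ j) := by
            apply ENNReal.ofReal_le_ofReal
            have hcast : ((j:ℝ) + 2) ^ 2 ≤ 8 * 2 ^ j := by
              have h := CatAux.nat_sq_le j
              have h' : ((j + 2 : ℕ) : ℝ) ^ 2 + 1 ≤ 8 * (2:ℝ) ^ j := by
                exact_mod_cast h
              push_cast at h'
              linarith
            have hmul := mul_le_mul_of_nonneg_right hcast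
              (show (0:ℝ) ≤ 800 * R ^ 2 / ((2 ^ j) ^ 2) by positivity)
            calc ((j:ℝ) + 2) ^ 2 * (800 * b ^ 2)
                = ((j:ℝ) + 2) ^ 2 * (800 * R ^ 2 / ((2 ^ j) ^ 2)) := by
                  rw [hbdef, div_pow]; ring
              _ ≤ 8 * 2 ^ j * (800 * R ^ 2 / ((2 ^ j) ^ 2)) := hmul
              _ = 6400 * R ^ 2 * (1 / 2) ^ j := by
                  rw [div_pow, one_pow]
                  field_simp
                  ring
        _ = ENNReal.ofReal (6400 * R ^ 2) * 2⁻¹ ^ j := by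
            rw [ENNReal.ofReal_mul (by positivity),
              ENNReal.ofReal_pow (by norm_num : (0:ℝ) ≤ 1 / 2)]
            congr 1
            rw [one_div, ENNReal.ofReal_inv_of_pos (by norm_num)]
            norm_num
    · have hempty : A j = ∅ := by
        ext z
        simp only [hA, Set.mem_inter_iff, Set.mem_setOf_eq, Set.mem_empty_iff_false,
          iff_false, not_and]
        intro hzN h1 h2
        have := hzN.1
        have hmax : (1:ℝ) ≤ max 1 (R / 2 ^ (j + 1)) := le_max_left _ _
        push_neg at hbj
        linarith
      rw [hempty, Measure.restrict_empty, lintegral_zero_measure]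
      exact zero_le
  calc ∫⁻ z in catSurface ∩ closedBall (0 : EuclideanSpace ℝ (Fin 3)) R, F z ∂μH[2]
      ≤ ∫⁻ z in ⋃ j, A j, F z ∂μH[2] := lintegral_mono_set hcover
    _ ≤ ∑' j, ∫⁻ z in A j, F z ∂μH[2] := lintegral_iUnion_le _ _
    _ ≤ ∑' j : ℕ, ENNReal.ofReal (6400 * R ^ 2) * 2⁻¹ ^ j := ENNReal.tsum_le_tsum hterm
    _ = ENNReal.ofReal (6400 * R ^ 2) * ∑' j : ℕ, 2⁻¹ ^ j := ENNReal.tsum_mul_left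
    _ ≤ ENNReal.ofReal (12800 * R ^ 2) := by
        rw [ENNReal.tsum_geometric, ENNReal.one_sub_inv_two, inv_inv]
        have heq : ENNReal.ofReal (12800 * R ^ 2)
            = ENNReal.ofReal (6400 * R ^ 2) * 2 := by
          rw [show (12800:ℝ) * R ^ 2 = 6400 * R ^ 2 * 2 by ring,
            ENNReal.ofReal_mul (by positivity), ENNReal.ofReal_ofNat]
        rw [heq]
end
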